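/- arXiv:2004.05996 — 2 statements merged into one kernel-verified Lean document; each statement's English description precedes it below -/
import Mathlib

section
/- Let β ∈ ℂ with Re(β) > −1, z ∈ ℂ, and n ≥ 1 an integer, and take α = 1. Define the n×n tridiagonal-type complex matrix M by: M_{i,i} = B_{n+1−i,1} − z/(n+1−i) for 1 ≤ i ≤ n; M_{i,i+1} = 1 for 1 ≤ i ≤ n−1; M_{i,i−1} = B_{n+2−i,2} for 2 ≤ i ≤ n; and all other entries 0. Then L_n^{(1,β)}(z) = det M. -/
open Finset

/-- The generalized Laguerre polynomial
`L_n^{(α,β)}(z) = (Γ(αn+β+1)/n!) Σ_{k=0}^{n} ((−n)^{(k)}/Γ(αk+β+1)) z^k/k!`. -/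
noncomputable def genLaguerre (α : ℕ) (β : ℂ) (n : ℕ) (z : ℂ) : ℂ :=
  Complex.Gamma ((α : ℂ) * n + β + 1) / (n.factorial : ℂ) *
    ∑ k ∈ range (n + 1),
      (∏ i ∈ range k, (-(n : ℂ) + i)) / Complex.Gamma ((α : ℂ) * k + β + 1) *
        z ^ k / (k.factorial : ℂ)

/-- `C_{n,m}(α,β) = (1/(m!·n)) Σ_{j=0}^{m} (−1)^j binom(m,j)(n−j)·(α(n−j)+β)_α`,
where `(γ)_r = γ(γ−1)⋯(γ−r+1)` is the falling factorial. -/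
noncomputable def Cnm (α : ℕ) (β : ℂ) (n m : ℕ) : ℂ :=
  1 / ((m.factorial : ℂ) * n) *
    ∑ j ∈ range (m + 1), (-1 : ℂ) ^ j * (m.choose j : ℂ) * ((n : ℂ) - j) *
      ∏ i ∈ range α, ((α : ℂ) * ((n : ℂ) - j) + β - i)

/-- `B_{n,m} = (α(n−1)+β)_{(m−1)α} · C_{n,m}`. -/
noncomputable def Bnm (α : ℕ) (β : ℂ) (n m : ℕ) : ℂ :=
  (∏ i ∈ range ((m - 1) * α), ((α : ℂ) * ((n : ℂ) - 1) + β - i)) * Cnm α β n m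

/-! ### Auxiliary definitions -/

noncomputable def gg (β : ℂ) (k m : ℕ) : ℂ := ∏ i ∈ range m, (β + k + 1 + i)

noncomputable def cc (β : ℂ) (n k : ℕ) : ℂ :=
  if k ≤ n then (-1)^k * gg β k (n-k) / (((n-k).factorial : ℂ) * (k.factorial : ℂ)) else 0

noncomputable def ff (β z : ℂ) (n : ℕ) : ℂ := ∑ k ∈ range (n+1), cc β n k * z^k

noncomputable def MM (β z : ℂ) (k : ℕ) : Matrix (Fin k) (Fin k) ℂ :=
  Matrix.of fun i j =>
    if (j : ℕ) = (i : ℕ) + 1 then (1 : ℂ)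
    else if (i : ℕ) = (j : ℕ) then Bnm 1 β (k - (i : ℕ)) 1 - z / ((k : ℂ) - (i : ℕ))
    else if (i : ℕ) = (j : ℕ) + 1 then Bnm 1 β (k - (i : ℕ) + 1) 2
    else 0

lemma fne (n : ℕ) : ((n.factorial : ℂ)) ≠ 0 := Nat.cast_ne_zero.mpr n.factorial_ne_zero

lemma cne (n : ℕ) : ((n : ℂ) + 1) ≠ 0 := by
  exact_mod_cast (Nat.cast_ne_zero (R := ℂ)).mpr (Nat.succ_ne_zero n)

lemma gg_succ (β : ℂ) (k t : ℕ) : gg β k (t+1) = gg β k t * (β + k + 1 + t) := by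
  rw [gg, prod_range_succ]; rfl

lemma gg_shift (β : ℂ) (j t : ℕ) : gg β j (t+1) = (β + j + 1) * gg β (j+1) t := by
  rw [gg, prod_range_succ', gg]
  simp only [Nat.cast_zero, add_zero]
  rw [mul_comm]
  congr 1
  exact prod_congr rfl fun i _ => by push_cast; ring

/-! ### Closed form of the Laguerre polynomial -/

lemma Gamma_mul_gg (β : ℂ) (hβ : -1 < β.re) (k m : ℕ) :
    Complex.Gamma ((k:ℂ) + β + 1 + m) = Complex.Gamma ((k:ℂ) + β + 1) * gg β k m := by
  induction m with
  | zero => simp [gg]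
  | succ m ih =>
      have hne : ((k:ℂ) + β + 1 + m) ≠ 0 := by
        intro h
        have := congrArg Complex.re h
        simp [Complex.add_re] at this
        linarith
      have : ((k:ℂ) + β + 1 + (m+1:ℕ)) = ((k:ℂ) + β + 1 + m) + 1 := by push_cast; ring
      rw [this, Complex.Gamma_add_one _ hne, ih]
      simp only [gg, prod_range_succ]
      ring

lemma prod_desc (n k : ℕ) (hk : k ≤ n) :
    ∏ i ∈ range k, ((n:ℂ) - i) = (n.descFactorial k : ℂ) := by
  induction k with
  | zero => simp
  | succ k ih =>
      rw [prod_range_succ, ih (by omega), Nat.descFactorial_succ]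
      push_cast [Nat.cast_sub (by omega : k ≤ n)]
      ring

lemma closedForm (β : ℂ) (hβ : -1 < β.re) (z : ℂ) (n : ℕ) :
    genLaguerre 1 β n z = ff β z n := by
  rw [genLaguerre, ff, mul_sum]
  refine sum_congr rfl fun k hk => ?_
  have hk' : k ≤ n := by simpa using Nat.lt_succ_iff.mp (mem_range.mp hk)
  have h1 : ∏ i ∈ range k, (-(n : ℂ) + i) = (-1)^k * (n.descFactorial k : ℂ) := by
    rw [← prod_desc n k hk',
      show ((-1:ℂ))^k = ∏ _i ∈ range k, (-1:ℂ) by rw [prod_const, card_range], ← prod_mul_distrib]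
    exact prod_congr rfl fun i _ => by ring
  have hne : Complex.Gamma ((k:ℂ) + β + 1) ≠ 0 :=
    Complex.Gamma_ne_zero_of_re_pos (by simp [Complex.add_re]; linarith [Nat.cast_nonneg (α := ℝ) k])
  have h2 : Complex.Gamma ((1:ℂ) * n + β + 1) = Complex.Gamma ((k:ℂ) + β + 1) * gg β k (n - k) := by
    rw [← Gamma_mul_gg β hβ k (n-k)]
    congr 1
    push_cast [Nat.cast_sub hk']
    ring
  have h3 : (n.descFactorial k : ℂ) * ((n-k).factorial : ℂ) = (n.factorial : ℂ) := by
    rw [← Nat.cast_mul, mul_comm, Nat.factorial_mul_descFactorial hk']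
  have hnf : (n.factorial : ℂ) ≠ 0 := fne n
  have hnkf : ((n-k).factorial : ℂ) ≠ 0 := fne (n-k)
  have hkf : (k.factorial : ℂ) ≠ 0 := fne k
  simp only [Nat.cast_one] at h2 ⊢
  rw [cc, if_pos hk', h2, h1]
  have hone : (1:ℂ) * k = k := one_mul _
  rw [hone]
  field_simp
  rw [← h3]
  ring

/-! ### Three-term recurrence for the coefficients -/

lemma cc_key (β : ℂ) (m k : ℕ) (hk : k ≤ m + 2) :
    ((m:ℂ)+2) * cc β (m+2) k + (if k = 0 then 0 else cc β (m+1) (k-1)) =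
      (2*((m:ℂ)+2) - 1 + β) * cc β (m+1) k - (((m:ℂ)+1)+β) * cc β m k := by
  obtain _ | j := k
  · simp only [cc, if_pos (Nat.zero_le _), if_pos rfl]
    simp only [Nat.sub_zero, pow_zero, Nat.factorial_zero, Nat.cast_one, mul_one, one_mul]
    rw [show m+2 = (m+1)+1 from rfl, gg_succ, gg_succ]
    field_simp [fne m, fne (m+1), fne (m+1+1)]
    simp only [Nat.factorial_succ]
    push_cast
    ring
  · rw [if_neg (Nat.succ_ne_zero j)]
    simp only [Nat.add_sub_cancel]
    rcases lt_trichotomy j m with hlt | heq | hgt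
    · obtain ⟨t, ht⟩ : ∃ t, m = j + 1 + t := ⟨m - (j+1), by omega⟩
      subst ht
      rw [cc, if_pos (by omega), cc, if_pos (by omega), cc, if_pos (by omega), cc, if_pos (by omega)]
      have e1 : j + 1 + t + 2 - (j+1) = t + 1 + 1 := by omega
      have e2 : j + 1 + t + 1 - j = t + 1 + 1 := by omega
      have e3 : j + 1 + t + 1 - (j+1) = t + 1 := by omega
      have e4 : j + 1 + t - (j+1) = t := by omega
      rw [e1, e2, e3, e4]
      have h3 : gg β (j+1) (t+1) = gg β (j+1) t * (β+(↑(j+1):ℂ)+1+t) := gg_succ β (j+1) t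
      have h1 : gg β (j+1) (t+1+1)
          = gg β (j+1) t * (β+(↑(j+1):ℂ)+1+t) * (β+(↑(j+1):ℂ)+1+(↑(t+1):ℂ)) := by
        rw [gg_succ, h3]
      have h2 : gg β j (t+1+1) = (β+(j:ℂ)+1) * (gg β (j+1) t * (β+(↑(j+1):ℂ)+1+t)) := by
        rw [gg_shift, h3]
      rw [h1, h2, h3]
      simp only [pow_succ]
      field_simp [fne t, fne j, fne (t+1), fne (t+1+1), fne (j+1)]
      simp only [Nat.factorial_succ]
      push_cast
      ring
    · subst heq
      rw [cc, if_pos (by omega), cc, if_pos (by omega), cc, if_pos (by omega), cc, if_neg (by omega)]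
      have e1 : j + 2 - (j+1) = 0 + 1 := by omega
      have e2 : j + 1 - j = 0 + 1 := by omega
      have e3 : j + 1 - (j+1) = 0 := by omega
      rw [e1, e2, e3]
      rw [gg_succ, gg_shift]
      simp only [gg, prod_range_zero, pow_succ, Nat.cast_zero]
      field_simp [fne j, fne (j+1), fne (0+1)]
      simp only [Nat.factorial_succ, Nat.factorial_zero]
      push_cast
      ring
    · have hj2 : j = m + 1 := by omega
      subst hj2
      rw [cc, if_pos (by omega), cc, if_pos (by omega), cc, if_neg (by omega), cc, if_neg (by omega)]
      have e1 : m + 2 - (m+1+1) = 0 := by omega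
      have e2 : m + 1 - (m+1) = 0 := by omega
      rw [e1, e2]
      simp only [gg, prod_range_zero, pow_succ]
      field_simp [fne m, fne (m+1), fne (m+1+1)]
      simp only [Nat.factorial_succ, Nat.factorial_zero]
      push_cast
      ring

lemma ff_rec (β z : ℂ) (m : ℕ) :
    ((m:ℂ)+2) * ff β z (m+2) =
      (2*((m:ℂ)+2) - 1 + β - z) * ff β z (m+1) - (((m:ℂ)+1)+β) * ff β z m := by
  have hext1 : ff β z (m+1) = ∑ k ∈ range (m+3), cc β (m+1) k * z^k := by
    rw [show m+3 = (m+2)+1 from rfl, sum_range_succ, cc, if_neg (by omega)]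
    simp [ff]
  have hext2 : ff β z m = ∑ k ∈ range (m+3), cc β m k * z^k := by
    rw [show m+3 = (m+1)+1+1 from rfl, sum_range_succ, sum_range_succ]
    have h1 : cc β m (m+1) = 0 := by rw [cc, if_neg (by omega)]
    have h2 : cc β m (m+1+1) = 0 := by rw [cc, if_neg (by omega)]
    rw [h1, h2]; simp [ff]
  have hz : z * ff β z (m+1) =
      ∑ k ∈ range (m+3), (if k = 0 then 0 else cc β (m+1) (k-1)) * z^k := by
    rw [show m+3 = (m+2)+1 from rfl,
      sum_range_succ' (fun k => (if k = 0 then 0 else cc β (m+1) (k-1)) * z^k) (m+2)]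
    simp only [Nat.succ_ne_zero, if_false, Nat.add_sub_cancel, reduceIte, zero_mul, add_zero,
      ff, mul_sum]
    exact sum_congr rfl fun k _ => by ring
  have lhs : ((m:ℂ)+2) * ff β z (m+2) + z * ff β z (m+1) =
      (2*((m:ℂ)+2) - 1 + β) * ff β z (m+1) - (((m:ℂ)+1)+β) * ff β z m := by
    rw [hz, hext1, hext2, ff, mul_sum, mul_sum, mul_sum, ← sum_add_distrib, ← sum_sub_distrib]
    refine sum_congr rfl fun k hk => ?_
    have hk' : k ≤ m + 2 := by have := mem_range.mp hk; omega
    linear_combination (z^k) * cc_key β m k hk'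
  linear_combination lhs

/-! ### Values of `Bnm` for `α = 1` -/

lemma Bnm1 (β : ℂ) (n : ℕ) (hn : 1 ≤ n) :
    Bnm 1 β n 1 = (2*(n:ℂ) - 1 + β) / n := by
  obtain ⟨p, rfl⟩ : ∃ p, n = p + 1 := ⟨n - 1, by omega⟩
  rw [Bnm, Cnm]
  simp only [Nat.cast_one, one_mul, Nat.factorial_one, Nat.sub_self, Nat.zero_mul,
    prod_range_zero, range_one, prod_range_one]
  rw [sum_range_succ, sum_range_succ, sum_range_zero]
  push_cast [Nat.choose_zero_right, Nat.choose_self, Nat.choose_one_right, prod_singleton]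
  field_simp [cne p]
  ring

lemma Bnm2 (β : ℂ) (n : ℕ) :
    Bnm 1 β (n+2) 2 = ((n:ℂ) + 1 + β) / ((n:ℂ) + 2) := by
  rw [Bnm, Cnm]
  simp only [Nat.cast_one, one_mul, Nat.factorial_two, prod_range_one]
  rw [show (2-1)*1 = 0+1 from rfl, prod_range_one]
  rw [sum_range_succ, sum_range_succ, sum_range_succ, sum_range_zero]
  push_cast [Nat.choose_zero_right, Nat.choose_self, Nat.choose_one_right, prod_singleton]
  have h2 : ((n:ℂ) + 2) ≠ 0 := by
    have := cne (n+1); push_cast at this; intro h; exact this (by linear_combination h)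
  field_simp [h2]
  ring

/-! ### Determinant recurrence -/

lemma MM_det_zero (β z : ℂ) : (MM β z 0).det = 1 := by
  simp [Matrix.det_fin_zero]

lemma MM_det_one (β z : ℂ) : (MM β z 1).det = Bnm 1 β 1 1 - z := by
  rw [Matrix.det_fin_one]
  simp [MM]

lemma MM_submatrix₁ (β z : ℂ) (k : ℕ) :
    (MM β z (k+1)).submatrix Fin.succ Fin.succ = MM β z k := by
  ext i j
  simp only [Matrix.submatrix_apply, MM, Matrix.of_apply, Fin.val_succ]
  have e1 : ((j:ℕ)+1 = (i:ℕ)+1+1) ↔ ((j:ℕ) = (i:ℕ)+1) := by omega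
  have e2 : ((i:ℕ)+1 = (j:ℕ)+1) ↔ ((i:ℕ) = (j:ℕ)) := by omega
  have e3 : ((i:ℕ)+1 = (j:ℕ)+1+1) ↔ ((i:ℕ) = (j:ℕ)+1) := by omega
  have e4 : k + 1 - ((i:ℕ)+1) = k - (i:ℕ) := by omega
  simp only [e4]
  push_cast
  rw [show ((k:ℂ) + 1 - (((i:ℕ):ℂ) + 1)) = (k:ℂ) - ((i:ℕ):ℂ) from by ring]

lemma MM_det_rec (β z : ℂ) (k : ℕ) :
    (MM β z (k+2)).det =
      (Bnm 1 β (k+2) 1 - z / ((k:ℂ)+2)) * (MM β z (k+1)).det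
        - Bnm 1 β (k+2) 2 * (MM β z k).det := by
  have hA : ∀ j : Fin k, MM β z (k+2) 0 j.succ.succ = 0 := by
    intro j
    simp only [MM, Matrix.of_apply, Fin.val_zero, Fin.val_succ]
    split_ifs <;> first | rfl | (exact False.elim ‹False›) | (exfalso; omega)
  have h00 : MM β z (k+2) 0 0 = Bnm 1 β (k+2) 1 - z / ((k:ℂ)+2) := by
    simp only [MM, Matrix.of_apply, Fin.val_zero]
    norm_num
  have h01 : MM β z (k+2) 0 1 = 1 := by
    have hv : ((1 : Fin (k+2)) : ℕ) = 0 + 1 := rfl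
    simp only [MM, Matrix.of_apply, Fin.val_zero, hv]
    norm_num
  have hsucc1 : (Fin.succ 0 : Fin (k+2)) = 1 := rfl
  rw [Matrix.det_succ_row_zero, Fin.sum_univ_succ, Fin.sum_univ_succ]
  rw [Finset.sum_eq_zero (fun j _ => by rw [hA j]; ring)]
  rw [Fin.succAbove_zero, MM_submatrix₁, h00, hsucc1, h01]
  have hsa0 : (1 : Fin (k+2)).succAbove 0 = 0 := rfl
  have hsub : ((MM β z (k+2)).submatrix Fin.succ (Fin.succAbove 1)).det
      = Bnm 1 β (k+2) 2 * (MM β z k).det := by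
    set B := (MM β z (k+2)).submatrix Fin.succ (Fin.succAbove (1 : Fin (k+2))) with hB
    have hB0 : B 0 0 = Bnm 1 β (k+2) 2 := by
      simp only [hB, Matrix.submatrix_apply, hsa0]
      simp only [MM, Matrix.of_apply, Fin.val_succ, Fin.val_zero]
      have e : k + 2 - (0 + 1) + 1 = k + 2 := by omega
      split_ifs <;> first | (rw [e]) | (exact False.elim ‹False›) | (exfalso; omega)
    have hBi : ∀ i : Fin k, B i.succ 0 = 0 := by
      intro i
      simp only [hB, Matrix.submatrix_apply, hsa0]
      simp only [MM, Matrix.of_apply, Fin.val_succ, Fin.val_zero]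
      split_ifs <;> first | rfl | (exact False.elim ‹False›) | (exfalso; omega)
    have hBsub : B.submatrix Fin.succ Fin.succ = MM β z k := by
      have hsa : ∀ j : Fin k, (1 : Fin (k+2)).succAbove j.succ = j.succ.succ := by
        intro j
        apply Fin.succAbove_of_le_castSucc
        rw [Fin.le_def]
        simp [Fin.val_one]
      have h1 : B.submatrix Fin.succ Fin.succ
          = ((MM β z (k+2)).submatrix Fin.succ Fin.succ).submatrix Fin.succ Fin.succ := by
        ext i j
        simp only [hB, Matrix.submatrix_apply, hsa]
      rw [h1, MM_submatrix₁, MM_submatrix₁]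
    rw [Matrix.det_succ_column_zero, Fin.sum_univ_succ]
    rw [Finset.sum_eq_zero (fun i _ => by rw [hBi i]; ring)]
    rw [hB0, Fin.succAbove_zero, hBsub]
    norm_num
  rw [hsub]
  simp only [Fin.val_zero, Fin.val_one, pow_zero, pow_one]
  push_cast
  ring

/-! ### Putting everything together -/

lemma ff_zero (β z : ℂ) : ff β z 0 = 1 := by
  simp [ff, cc, gg]

lemma ff_eq_det (β z : ℂ) : ∀ k, ff β z k = (MM β z k).det := by
  intro k
  induction k using Nat.strong_induction_on with
  | _ k ih =>
    match k with
    | 0 => rw [ff_zero, MM_det_zero]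
    | 1 =>
        rw [MM_det_one, Bnm1 β 1 le_rfl, ff]
        rw [sum_range_succ, sum_range_succ, sum_range_zero]
        simp only [cc, if_pos (by omega : (0:ℕ) ≤ 1), if_pos (le_refl 1)]
        simp [gg]
        push_cast
        ring
    | (m+2) =>
        have h2 : ((m:ℂ)+2) ≠ 0 := by
          have := cne (m+1); push_cast at this; intro h; exact this (by linear_combination h)
        rw [MM_det_rec, ← ih (m+1) (by omega), ← ih m (by omega),
          Bnm1 β (m+2) (by omega), Bnm2 β m]
        apply mul_left_cancel₀ h2
        rw [show ((m:ℂ)+2) * ff β z (m+2)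
            = (2*((m:ℂ)+2) - 1 + β - z) * ff β z (m+1) - (((m:ℂ)+1)+β) * ff β z m
          from ff_rec β z m]
        push_cast
        field_simp

/-- Tridiagonal-type determinant expression of `L_n^{(1,β)}(z)`.  The matrix is
indexed by `Fin n`; `i, j : Fin n` correspond to the 1-indexed entries `(i+1, j+1)`. -/
theorem classicalLaguerre_det (β : ℂ) (hβ : -1 < β.re) (z : ℂ)
    (n : ℕ) (hn : 1 ≤ n) :
    genLaguerre 1 β n z =
      Matrix.det (Matrix.of fun i j : Fin n =>
        if (j : ℕ) = (i : ℕ) + 1 then (1 : ℂ)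
        else if (i : ℕ) = (j : ℕ) then
          Bnm 1 β (n - (i : ℕ)) 1 - z / ((n : ℂ) - (i : ℕ))
        else if (i : ℕ) = (j : ℕ) + 1 then Bnm 1 β (n - (i : ℕ) + 1) 2
        else 0) := by
  rw [closedForm β hβ z n]
  exact ff_eq_det β z n
end

section
/- Let α be a positive integer, β ∈ ℂ with Re(β) > −1, and n ≥ 1 an integer. Then Σ_{m=1}^{n} (−1)^{m−1} · C_{n,m}/(n−m)! = Γ(αn+β+1)/(Γ(α(n−1)+β+1)·n!). -/
open Finset

lemma alt_sum_choose (N : ℕ) :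
    ∑ s ∈ range (N + 1), (-1 : ℂ) ^ s * (N.choose s : ℂ)
      = if N = 0 then 1 else 0 := by
  have h2 := congrArg (fun z : ℤ => (z : ℂ)) (Int.alternating_sum_range_choose (n := N))
  push_cast at h2
  simpa [apply_ite (fun z : ℤ => (z : ℂ))] using h2

lemma cast_choose_eq (a b : ℕ) (h : b ≤ a) :
    (a.choose b : ℂ) * (b.factorial : ℂ) * ((a - b).factorial : ℂ) = (a.factorial : ℂ) := by
  exact_mod_cast congrArg (Nat.cast (R := ℂ)) (Nat.choose_mul_factorial_mul_factorial h)

lemma gamma_shift (z : ℂ) (hz : 0 < z.re) (k : ℕ) :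
    Complex.Gamma (z + k) = (∏ i ∈ range k, (z + i)) * Complex.Gamma z := by
  induction k with
  | zero => simp
  | succ k ih =>
    have hne : z + k ≠ 0 := by
      intro h
      have : (z + (k:ℂ)).re = 0 := by rw [h]; simp
      simp only [Complex.add_re, Complex.natCast_re] at this
      have : (0:ℝ) ≤ (k:ℝ) := Nat.cast_nonneg k
      linarith
    have he : z + ((k+1 : ℕ) : ℂ) = (z + k) + 1 := by push_cast; ring
    rw [he, Complex.Gamma_add_one _ hne, ih, prod_range_succ]; ring

lemma inner_sum_zero (n : ℕ) (hn : 1 ≤ n) :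
    ∑ m ∈ Icc 1 n, (-1 : ℂ) ^ (m - 1) * (m.choose 0 : ℂ) /
        ((m.factorial : ℂ) * ((n - m).factorial : ℂ))
      = 1 / (n.factorial : ℂ) := by
  have key : ∑ i ∈ range n, (-1 : ℂ) ^ i * (n.choose (1 + i) : ℂ) = 1 := by
    have h0 := alt_sum_choose n
    rw [if_neg (by omega), Finset.sum_range_succ'] at h0
    have h1 : ∑ i ∈ range n, (-1 : ℂ) ^ (i + 1) * (n.choose (i + 1) : ℂ)
        = -∑ i ∈ range n, (-1 : ℂ) ^ i * (n.choose (1 + i) : ℂ) := by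
      rw [← Finset.sum_neg_distrib]
      refine Finset.sum_congr rfl fun i _ => ?_
      rw [add_comm 1 i]; ring
    rw [h1] at h0
    simp only [pow_zero, Nat.choose_zero_right, Nat.cast_one, one_mul] at h0
    linear_combination -h0
  rw [← Finset.Ico_add_one_right_eq_Icc, Finset.sum_Ico_eq_sum_range]

  have hstep : ∀ i ∈ range n,
      (-1 : ℂ) ^ (1 + i - 1) * ((1 + i).choose 0 : ℂ) /
        (((1 + i).factorial : ℂ) * ((n - (1 + i)).factorial : ℂ))
      = (-1 : ℂ) ^ i * (n.choose (1 + i) : ℂ) / (n.factorial : ℂ) := by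
    intro i hi
    simp only [mem_range] at hi
    have hle : 1 + i ≤ n := by omega
    have hc := cast_choose_eq n (1 + i) hle
    have hf1 : ((1 + i).factorial : ℂ) ≠ 0 := Nat.cast_ne_zero.2 (Nat.factorial_ne_zero _)
    have hf2 : ((n - (1 + i)).factorial : ℂ) ≠ 0 := Nat.cast_ne_zero.2 (Nat.factorial_ne_zero _)
    have hf3 : ((n).factorial : ℂ) ≠ 0 := Nat.cast_ne_zero.2 (Nat.factorial_ne_zero _)
    have he : 1 + i - 1 = i := by omega
    rw [he, Nat.choose_zero_right]
    rw [Nat.cast_one, div_eq_div_iff (mul_ne_zero hf1 hf2) hf3]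
    linear_combination (-(-1 : ℂ) ^ i) * hc
  rw [Nat.add_sub_cancel, Finset.sum_congr rfl hstep, ← Finset.sum_div, key]

lemma inner_sum_pos (n j : ℕ) (hj1 : 1 ≤ j) (hjn : j ≤ n) :
    ∑ m ∈ Icc 1 n, (-1 : ℂ) ^ (m - 1) * (m.choose j : ℂ) /
        ((m.factorial : ℂ) * ((n - m).factorial : ℂ))
      = if j = n then (-1 : ℂ) ^ (n - 1) / (n.factorial : ℂ) else 0 := by
  have hsub : Icc j n ⊆ Icc 1 n := Finset.Icc_subset_Icc hj1 le_rfl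
  have hzero : ∀ m ∈ Icc 1 n, m ∉ Icc j n →
      (-1 : ℂ) ^ (m - 1) * (m.choose j : ℂ) /
        ((m.factorial : ℂ) * ((n - m).factorial : ℂ)) = 0 := by
    intro m hm hm'
    simp only [mem_Icc] at hm hm'
    have : m < j := by omega
    rw [Nat.choose_eq_zero_of_lt this]
    simp
  rw [← Finset.sum_subset hsub hzero, ← Finset.Ico_add_one_right_eq_Icc, Finset.sum_Ico_eq_sum_range]
  have hstep : ∀ s ∈ range (n + 1 - j),
      (-1 : ℂ) ^ (j + s - 1) * ((j + s).choose j : ℂ) /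
        (((j + s).factorial : ℂ) * ((n - (j + s)).factorial : ℂ))
      = (-1 : ℂ) ^ (j - 1) / ((j.factorial : ℂ) * ((n - j).factorial : ℂ)) *
          ((-1 : ℂ) ^ s * ((n - j).choose s : ℂ)) := by
    intro s hs
    simp only [mem_range] at hs
    have hsle : s ≤ n - j := by omega
    have hc1 : ((j + s).choose j : ℂ) * (j.factorial : ℂ) * ((s).factorial : ℂ)
        = ((j + s).factorial : ℂ) := by
      have := cast_choose_eq (j + s) j (by omega)
      simpa [Nat.add_sub_cancel_left] using this
    have hc2 : ((n - j).choose s : ℂ) * (s.factorial : ℂ) * ((n - j - s).factorial : ℂ)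
        = ((n - j).factorial : ℂ) := cast_choose_eq (n - j) s hsle
    have hnn : n - (j + s) = n - j - s := by omega
    have hpow : (-1 : ℂ) ^ (j + s - 1) = (-1 : ℂ) ^ (j - 1) * (-1 : ℂ) ^ s := by
      rw [← pow_add]
      congr 1
      omega
    have hf1 : ((j + s).factorial : ℂ) ≠ 0 := Nat.cast_ne_zero.2 (Nat.factorial_ne_zero _)
    have hf2 : ((n - j - s).factorial : ℂ) ≠ 0 := Nat.cast_ne_zero.2 (Nat.factorial_ne_zero _)
    have hf3 : ((n - j).factorial : ℂ) ≠ 0 := Nat.cast_ne_zero.2 (Nat.factorial_ne_zero _)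
    have hf4 : ((j).factorial : ℂ) ≠ 0 := Nat.cast_ne_zero.2 (Nat.factorial_ne_zero _)
    have hf5 : ((s).factorial : ℂ) ≠ 0 := Nat.cast_ne_zero.2 (Nat.factorial_ne_zero _)
    have hC1 : ((j + s).choose j : ℂ) ≠ 0 :=
      Nat.cast_ne_zero.2 (Nat.choose_pos (Nat.le_add_right j s)).ne'
    have hC2 : ((n - j).choose s : ℂ) ≠ 0 := Nat.cast_ne_zero.2 (Nat.choose_pos hsle).ne'
    rw [hnn, hpow, ← hc1, ← hc2]
    field_simp
  rw [Finset.sum_congr rfl hstep, ← Finset.mul_sum]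
  have hrange : n + 1 - j = (n - j) + 1 := by omega
  rw [hrange, alt_sum_choose (n - j)]
  by_cases hjeq : j = n
  · subst hjeq
    simp [Nat.sub_self]
  · rw [if_neg (by omega), if_neg hjeq, mul_zero]

/-- `Σ_{m=1}^{n} (−1)^{m−1} C_{n,m}/(n−m)! = Γ(αn+β+1)/(Γ(α(n−1)+β+1)·n!)`. -/
theorem Cnm_full_sum_identity (α : ℕ) (hα : 0 < α) (β : ℂ) (hβ : -1 < β.re)
    (n : ℕ) (hn : 1 ≤ n) :
    ∑ m ∈ Icc 1 n, (-1 : ℂ) ^ (m - 1) * Cnm α β n m / ((n - m).factorial : ℂ) =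
      Complex.Gamma ((α : ℂ) * n + β + 1) /
        (Complex.Gamma ((α : ℂ) * ((n : ℂ) - 1) + β + 1) * (n.factorial : ℂ)) := by

  have hn0 : (n : ℂ) ≠ 0 := Nat.cast_ne_zero.2 (by omega)
  have hfact : ∀ k : ℕ, ((k.factorial : ℂ)) ≠ 0 :=
    fun k => Nat.cast_ne_zero.2 (Nat.factorial_ne_zero k)
  set Q : ℕ → ℂ := fun j => ∏ i ∈ range α, ((α : ℂ) * ((n : ℂ) - j) + β - i) with hQ
  -- Step 1: rewrite each summand as a sum over j ∈ range (n+1)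
  have step1 : ∀ m ∈ Icc 1 n,
      (-1 : ℂ) ^ (m - 1) * Cnm α β n m / ((n - m).factorial : ℂ)
      = ∑ j ∈ range (n + 1),
          ((-1 : ℂ) ^ j * ((n : ℂ) - j) * Q j / (n : ℂ)) *
            ((-1 : ℂ) ^ (m - 1) * (m.choose j : ℂ) /
              ((m.factorial : ℂ) * ((n - m).factorial : ℂ))) := by
    intro m hm
    simp only [mem_Icc] at hm
    rw [Cnm]
    have hext : ∑ j ∈ range (m + 1), (-1 : ℂ) ^ j * (m.choose j : ℂ) * ((n : ℂ) - j) * Q j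
        = ∑ j ∈ range (n + 1), (-1 : ℂ) ^ j * (m.choose j : ℂ) * ((n : ℂ) - j) * Q j := by
      apply Finset.sum_subset (Finset.range_subset_range.2 (by omega))
      intro j hj hj'
      simp only [mem_range] at hj hj'
      rw [Nat.choose_eq_zero_of_lt (by omega)]
      simp
    rw [hext, Finset.mul_sum, Finset.mul_sum, Finset.sum_div]
    refine Finset.sum_congr rfl fun j hj => ?_
    field_simp
  rw [Finset.sum_congr rfl step1, Finset.sum_comm]
  have step2 : ∀ j ∈ range (n + 1),
      (∑ m ∈ Icc 1 n,
        ((-1 : ℂ) ^ j * ((n : ℂ) - j) * Q j / (n : ℂ)) *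
          ((-1 : ℂ) ^ (m - 1) * (m.choose j : ℂ) /
            ((m.factorial : ℂ) * ((n - m).factorial : ℂ))))
      = ((-1 : ℂ) ^ j * ((n : ℂ) - j) * Q j / (n : ℂ)) *
          ∑ m ∈ Icc 1 n, (-1 : ℂ) ^ (m - 1) * (m.choose j : ℂ) /
            ((m.factorial : ℂ) * ((n - m).factorial : ℂ)) :=
    fun j _ => (Finset.mul_sum _ _ _).symm
  rw [Finset.sum_congr rfl step2]
  rw [Finset.sum_eq_single 0 (fun j hj hj0 => by
      simp only [mem_range] at hj
      rw [inner_sum_pos n j (by omega) (by omega)]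
      by_cases hjn' : j = n
      · subst hjn'
        simp
      · rw [if_neg hjn', mul_zero])
    (fun h => absurd (Finset.mem_range.2 (by omega)) h)]
  rw [inner_sum_zero n hn]
  have hval : ((-1 : ℂ) ^ 0 * ((n : ℂ) - (0 : ℕ)) * Q 0 / (n : ℂ)) * (1 / (n.factorial : ℂ))
      = Q 0 / (n.factorial : ℂ) := by
    field_simp
    simp
  rw [hval]
  -- Gamma side
  set z : ℂ := (α : ℂ) * ((n : ℂ) - 1) + β + 1 with hz
  have hzre : 0 < z.re := by
    have h1 : (1 : ℝ) ≤ (n : ℝ) := by exact_mod_cast hn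
    have hα0 : (0 : ℝ) ≤ (α : ℝ) := Nat.cast_nonneg α
    simp only [hz, Complex.add_re, Complex.mul_re, Complex.sub_re, Complex.one_re,
      Complex.natCast_re, Complex.natCast_im, Complex.one_im, Complex.sub_im,
      Complex.one_re]
    nlinarith
  have hgz : Complex.Gamma z ≠ 0 := Complex.Gamma_ne_zero_of_re_pos hzre
  have harg : (α : ℂ) * n + β + 1 = z + α := by rw [hz]; ring
  rw [harg, gamma_shift z hzre α]
  have hprod : ∏ i ∈ range α, (z + i) = Q 0 := by
    have hQ0 : Q 0 = ∏ i ∈ range α, ((α : ℂ) * (n : ℂ) + β - (i : ℂ)) := by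
      simp [hQ]
    rw [hQ0, ← Finset.prod_range_reflect (fun i => (α : ℂ) * (n : ℂ) + β - (i : ℂ)) α]
    refine Finset.prod_congr rfl fun j hj => ?_
    simp only [mem_range] at hj
    have h1 : ((α - 1 - j : ℕ) : ℂ) = (α : ℂ) - 1 - j := by
      have h2 : α - 1 - j = α - (1 + j) := by omega
      rw [h2, Nat.cast_sub (by omega)]
      push_cast
      ring
    rw [h1, hz]
    ring
  rw [hprod, div_eq_div_iff (hfact n) (mul_ne_zero hgz (hfact n))]
  ring
end
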